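/- Let Q be a bounded, positive, self-adjoint operator on a complex Hilbert space H, let γ > 0 and T a positive even integer with γ‖Q‖ < 1/4, let α ∈ [0, 1/2] and β ≥ 0. There exists a constant c < ∞, depending only on α and β, such that for every R > 0 and every h ∈ H with ‖h‖_H ≤ R: ‖Q^{α} R̄_T(Q) Q^{β} h‖_H ≤ c R (γT)^{−(α+β)}. (This is Proposition C.8, part 1: with Q = T_s and β = (r − s)/(2(a + s)), u = Q^{β} h is L^s f_H under the source condition f_H = L^{−s} T_s^{β} h of the preconditioning setting, and R̄_T(Q) u = L^s(f_H − g̃_T).) -/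

import Mathlib

/-- Fractional power `A^r` (for `r : ℝ`) of a bounded operator, via the continuous
functional calculus for self-adjoint operators (real power `x ↦ x ^ r`). -/
noncomputable def opPow {H : Type*} [NormedAddCommGroup H] [InnerProductSpace ℂ H]
    [CompleteSpace H] (A : H →L[ℂ] H) (r : ℝ) : H →L[ℂ] H :=
  cfc (fun x : ℝ => x ^ r) A

/-- The tail-averaged gradient-descent filter operator
`Ḡ_T(Q) = (2/T) ∑_{t=T/2+1}^{T} γ ∑_{k=0}^{t-1} (I - γQ)^k`. -/
noncomputable def Gbar {H : Type*} [NormedAddCommGroup H] [InnerProductSpace ℂ H]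
    [CompleteSpace H] (γ : ℝ) (T : ℕ) (Q : H →L[ℂ] H) : H →L[ℂ] H :=
  (2 / (T : ℂ)) • ∑ t ∈ Finset.Ioc (T / 2) T,
    (γ : ℂ) • ∑ k ∈ Finset.range t, (1 - (γ : ℂ) • Q) ^ k

/-- The tail-averaged gradient-descent residual operator
`R̄_T(Q) = (2/T) ∑_{t=T/2+1}^{T} (I - γQ)^t`. -/
noncomputable def Rbar {H : Type*} [NormedAddCommGroup H] [InnerProductSpace ℂ H]
    [CompleteSpace H] (γ : ℝ) (T : ℕ) (Q : H →L[ℂ] H) : H →L[ℂ] H :=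
  (2 / (T : ℂ)) • ∑ t ∈ Finset.Ioc (T / 2) T, (1 - (γ : ℂ) • Q) ^ t

section AuxLemmas
open Real Finset

private lemma aux_rpow_exp (s : ℝ) (hs : 0 ≤ s) (u : ℝ) (hu : 0 ≤ u) :
    u ^ s * Real.exp (-(u / 2)) ≤ 2 ^ ⌈s⌉₊ * (Nat.factorial ⌈s⌉₊) + 1 := by
  set n := ⌈s⌉₊ with hn
  have hfac : (0:ℝ) < (Nat.factorial n : ℝ) := by exact_mod_cast Nat.factorial_pos n
  have hC : (1:ℝ) ≤ 2 ^ n * (Nat.factorial n : ℝ) := by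
    have h1 : (1:ℝ) ≤ 2 ^ n := one_le_pow₀ (by norm_num)
    have h2 : (1:ℝ) ≤ (Nat.factorial n : ℝ) := by
      exact_mod_cast Nat.one_le_iff_ne_zero.mpr (Nat.factorial_pos n).ne'
    nlinarith
  rcases le_or_gt u 1 with h1 | h1
  · have hu1 : u ^ s ≤ 1 := Real.rpow_le_one hu h1 hs
    have he : Real.exp (-(u / 2)) ≤ 1 := Real.exp_le_one_iff.mpr (by linarith)
    have hp : 0 ≤ u ^ s := Real.rpow_nonneg hu s
    nlinarith
  · have h2 : u ^ s ≤ u ^ (n : ℝ) := Real.rpow_le_rpow_of_exponent_le h1.le (Nat.le_ceil s)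
    rw [Real.rpow_natCast] at h2
    have h3 : (u / 2) ^ n / (Nat.factorial n : ℝ) ≤ Real.exp (u / 2) := by
      refine le_trans ?_ (Real.sum_le_exp_of_nonneg (by linarith) (n + 1))
      exact Finset.single_le_sum (f := fun i => (u / 2) ^ i / (Nat.factorial i : ℝ))
        (fun i _ => by positivity) (Finset.self_mem_range_succ n)
    have h4 : u ^ n ≤ 2 ^ n * (Nat.factorial n : ℝ) * Real.exp (u / 2) := by
      have huu : u ^ n = 2 ^ n * (u / 2) ^ n := by
        rw [← mul_pow]; ring_nf
      rw [huu]
      calc (2:ℝ) ^ n * (u / 2) ^ n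
          = 2 ^ n * ((u / 2) ^ n / (Nat.factorial n : ℝ) * (Nat.factorial n : ℝ)) := by
            rw [div_mul_cancel₀ _ hfac.ne']
        _ ≤ 2 ^ n * (Real.exp (u / 2) * (Nat.factorial n : ℝ)) := by
            gcongr
        _ = 2 ^ n * (Nat.factorial n : ℝ) * Real.exp (u / 2) := by ring
    have hexp : Real.exp (u / 2) * Real.exp (-(u / 2)) = 1 := by
      rw [← Real.exp_add]; ring_nf; exact Real.exp_zero
    have hen : 0 ≤ Real.exp (-(u / 2)) := (Real.exp_pos _).le
    calc u ^ s * Real.exp (-(u / 2)) ≤ u ^ n * Real.exp (-(u / 2)) := by gcongr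
      _ ≤ (2 ^ n * (Nat.factorial n : ℝ) * Real.exp (u / 2)) * Real.exp (-(u / 2)) := by gcongr
      _ = 2 ^ n * (Nat.factorial n : ℝ) * (Real.exp (u / 2) * Real.exp (-(u / 2))) := by ring
      _ = 2 ^ n * (Nat.factorial n : ℝ) := by rw [hexp]; ring
      _ ≤ 2 ^ n * (Nat.factorial n : ℝ) + 1 := by linarith

private lemma key_bound (α β γ : ℝ) (m : ℕ) (hα0 : 0 ≤ α) (hβ : 0 ≤ β)
    (hγ : 0 < γ) (hm : 0 < m) (x : ℝ) (hx0 : 0 ≤ x) (hxb : γ * x < 1 / 4) :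
    x ^ α * ((2 / ((m + m : ℕ) : ℝ) * ∑ t ∈ Finset.Ioc m (m + m), (1 - γ * x) ^ t) * x ^ β)
      ≤ (2 ^ ⌈α + β⌉₊ * (Nat.factorial ⌈α + β⌉₊) + 1) *
        (γ * ((m + m : ℕ) : ℝ)) ^ (-(α + β)) := by
  have hmR : (0:ℝ) < (m:ℝ) := by exact_mod_cast hm
  have hv0 : 0 ≤ 1 - γ * x := by linarith
  have hterm : ∀ t ∈ Finset.Ioc m (m + m),
      (1 - γ * x) ^ t ≤ Real.exp (-((m:ℝ) * (γ * x))) := by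
    intro t ht
    have htm : m ≤ t := (Finset.mem_Ioc.mp ht).1.le
    have h1 : (1 - γ * x) ^ t ≤ Real.exp (-(γ * x)) ^ t :=
      pow_le_pow_left₀ hv0 (Real.one_sub_le_exp_neg _) t
    have h2 : Real.exp (-(γ * x)) ^ t = Real.exp ((t:ℝ) * -(γ * x)) := by
      rw [← Real.exp_nat_mul]
    rw [h2] at h1
    refine h1.trans (Real.exp_le_exp.mpr ?_)
    have hγx : 0 ≤ γ * x := by positivity
    have htm' : (m:ℝ) ≤ (t:ℝ) := by exact_mod_cast htm
    nlinarith
  have hcard : (Finset.Ioc m (m + m)).card = m := by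
    rw [Nat.card_Ioc]; omega
  have hsum_le : ∑ t ∈ Finset.Ioc m (m + m), (1 - γ * x) ^ t
      ≤ (m:ℝ) * Real.exp (-((m:ℝ) * (γ * x))) := by
    calc ∑ t ∈ Finset.Ioc m (m + m), (1 - γ * x) ^ t
        ≤ (Finset.Ioc m (m + m)).card • Real.exp (-((m:ℝ) * (γ * x))) :=
          Finset.sum_le_card_nsmul _ _ _ hterm
      _ = (m:ℝ) * Real.exp (-((m:ℝ) * (γ * x))) := by
          rw [hcard, nsmul_eq_mul]
  have hsum0 : 0 ≤ ∑ t ∈ Finset.Ioc m (m + m), (1 - γ * x) ^ t :=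
    Finset.sum_nonneg fun t _ => pow_nonneg hv0 t
  have hmm : ((m + m : ℕ) : ℝ) = (m:ℝ) + (m:ℝ) := by push_cast; ring
  have hr_le : 2 / ((m + m : ℕ) : ℝ) * ∑ t ∈ Finset.Ioc m (m + m), (1 - γ * x) ^ t
      ≤ Real.exp (-((m:ℝ) * (γ * x))) := by
    rw [hmm]
    calc 2 / ((m:ℝ) + m) * ∑ t ∈ Finset.Ioc m (m + m), (1 - γ * x) ^ t
        ≤ 2 / ((m:ℝ) + m) * ((m:ℝ) * Real.exp (-((m:ℝ) * (γ * x)))) := by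
          gcongr
      _ = Real.exp (-((m:ℝ) * (γ * x))) := by field_simp; ring
  have hr0 : 0 ≤ 2 / ((m + m : ℕ) : ℝ) * ∑ t ∈ Finset.Ioc m (m + m), (1 - γ * x) ^ t := by
    rw [hmm]; positivity
  set s := α + β with hsdef
  have hs0 : 0 ≤ s := by positivity
  have hC1 : (1:ℝ) ≤ 2 ^ ⌈s⌉₊ * (Nat.factorial ⌈s⌉₊ : ℝ) := by
    have h1 : (1:ℝ) ≤ 2 ^ ⌈s⌉₊ := one_le_pow₀ (by norm_num)
    have h2 : (1:ℝ) ≤ (Nat.factorial ⌈s⌉₊ : ℝ) := by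
      exact_mod_cast Nat.one_le_iff_ne_zero.mpr (Nat.factorial_pos _).ne'
    nlinarith
  rcases eq_or_lt_of_le hs0 with hs | hs
  · -- s = 0, hence α = β = 0
    have hα' : α = 0 := by rw [hsdef] at hs; linarith
    have hβ' : β = 0 := by rw [hsdef] at hs; linarith
    have hmgx : 0 ≤ (m:ℝ) * (γ * x) := by positivity
    have he1 : Real.exp (-((m:ℝ) * (γ * x))) ≤ 1 :=
      Real.exp_le_one_iff.mpr (by linarith)
    subst hα'; subst hβ'
    norm_num [Real.rpow_zero, Nat.factorial]
    rw [hmm] at hr_le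
    linarith
  · -- s > 0
    set D := γ * ((m + m : ℕ) : ℝ) with hD
    have hD0 : 0 < D := by rw [hD, hmm]; positivity
    have hux : (m:ℝ) * (γ * x) = D * x / 2 := by rw [hD, hmm]; ring
    have hxab : x ^ α * x ^ β = x ^ s := (Real.rpow_add' hx0 (by rw [← hsdef]; exact hs.ne')).symm
    have hxs : x ^ s = (D * x) ^ s * D ^ (-s) := by
      rw [Real.mul_rpow hD0.le hx0, Real.rpow_neg hD0.le]
      field_simp [ (Real.rpow_pos_of_pos hD0 s).ne' ]
    have hmain : (D * x) ^ s * Real.exp (-(D * x / 2))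
        ≤ 2 ^ ⌈s⌉₊ * (Nat.factorial ⌈s⌉₊ : ℝ) + 1 :=
      aux_rpow_exp s hs0 (D * x) (by positivity)
    have hxa0 : 0 ≤ x ^ α := Real.rpow_nonneg hx0 α
    have hxb0 : 0 ≤ x ^ β := Real.rpow_nonneg hx0 β
    calc x ^ α * ((2 / ((m + m : ℕ) : ℝ) * ∑ t ∈ Finset.Ioc m (m + m), (1 - γ * x) ^ t) * x ^ β)
        ≤ x ^ α * (Real.exp (-((m:ℝ) * (γ * x))) * x ^ β) := by gcongr
      _ = (x ^ α * x ^ β) * Real.exp (-(D * x / 2)) := by rw [hux]; ring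
      _ = ((D * x) ^ s * Real.exp (-(D * x / 2))) * D ^ (-s) := by
          rw [hxab, hxs]; ring
      _ ≤ (2 ^ ⌈s⌉₊ * (Nat.factorial ⌈s⌉₊ : ℝ) + 1) * D ^ (-s) := by
          gcongr

end AuxLemmas
/-- Proposition C.8, part 1.
For a bounded positive self-adjoint operator `Q`, `γ > 0`, a positive even integer
`T` with `γ‖Q‖ < 1/4`, `α ∈ [0, 1/2]` and `β ≥ 0`, there is a constant `c`
(depending only on `α` and `β`) such that for every `R > 0` and every `h` with
`‖h‖ ≤ R`: `‖Q^α R̄_T(Q) Q^β h‖ ≤ c R (γT)^{-(α+β)}`. -/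
theorem source_condition_residual_bound
    {H : Type*} [NormedAddCommGroup H] [InnerProductSpace ℂ H] [CompleteSpace H]
    (α β : ℝ) (hα : α ∈ Set.Icc (0 : ℝ) (1 / 2)) (hβ : 0 ≤ β) :
    ∃ c : ℝ, ∀ Q : H →L[ℂ] H, Q.IsPositive →
      ∀ (γ : ℝ) (T : ℕ), 0 < γ → 0 < T → Even T → γ * ‖Q‖ < 1 / 4 →
      ∀ (R : ℝ), 0 < R → ∀ h : H, ‖h‖ ≤ R →
        ‖opPow Q α (Rbar γ T Q (opPow Q β h))‖ ≤
          c * R * (γ * (T : ℝ)) ^ (-(α + β)) := by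
  classical
  set C : ℝ := 2 ^ ⌈α + β⌉₊ * (Nat.factorial ⌈α + β⌉₊ : ℝ) + 1 with hCdef
  have hC0 : 0 < C := by positivity
  refine ⟨C, ?_⟩
  intro Q hQpos γ T hγ hT hTe hQnorm R hR h hhR
  obtain ⟨m, rfl⟩ := hTe
  have hm : 0 < m := by omega
  have hRHS0 : 0 ≤ C * R * (γ * ((m + m : ℕ) : ℝ)) ^ (-(α + β)) := by positivity
  rcases subsingleton_or_nontrivial H with hH | hH
  · have hz : opPow Q α (Rbar γ (m + m) Q (opPow Q β h)) = 0 := Subsingleton.elim _ _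
    rw [hz, norm_zero]; exact hRHS0
  have hsa : IsSelfAdjoint Q := hQpos.isSelfAdjoint
  have hQ0 : (0 : H →L[ℂ] H) ≤ Q := (ContinuousLinearMap.nonneg_iff_isPositive Q).mpr hQpos
  have hhalf : (m + m) / 2 = m := by omega
  set g : ℝ → ℝ := fun x => ∑ t ∈ Finset.Ioc m (m + m), (1 - γ * x) ^ t with hgdef
  set r : ℝ → ℝ := fun x => 2 / ((m + m : ℕ) : ℝ) * g x with hrdef
  have hgc : Continuous g := by
    apply continuous_finset_sum
    intro t _
    exact ((continuous_const.sub (continuous_const.mul continuous_id))).pow t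
  have hrc : Continuous r := continuous_const.mul hgc
  have hstep : cfc (fun x : ℝ => 1 - γ * x) Q = 1 - γ • Q := by
    have h1 : cfc (fun x : ℝ => 1 - γ * x) Q
        = cfc (fun _ : ℝ => (1 : ℝ)) Q - cfc (fun x : ℝ => γ * x) Q :=
      cfc_sub (fun _ : ℝ => (1 : ℝ)) (fun x : ℝ => γ * x) Q (by fun_prop) (by fun_prop)
    rw [h1, cfc_const_mul_id γ Q hsa, cfc_const 1 Q hsa, map_one]
  have hRbar : Rbar γ (m + m) Q = cfc r Q := by
    have hsum : cfc g Q = ∑ t ∈ Finset.Ioc m (m + m), (1 - γ • Q) ^ t := by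
      have hgeq : g = ∑ t ∈ Finset.Ioc m (m + m), (fun x : ℝ => (1 - γ * x) ^ t) := by
        ext x; simp [hgdef]
      rw [hgeq, cfc_sum _ Q _ (fun t _ => by fun_prop)]
      refine Finset.sum_congr rfl fun t _ => ?_
      rw [cfc_pow (fun x : ℝ => 1 - γ * x) t Q (by fun_prop) hsa, hstep]
    have hcast : (2 / (((m + m : ℕ) : ℕ) : ℂ)) = (((2 / ((m + m : ℕ) : ℝ)) : ℝ) : ℂ) := by
      push_cast; ring
    rw [Rbar, hcast, Complex.coe_smul, hhalf]
    simp only [Complex.coe_smul]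
    rw [hrdef]
    rw [cfc_const_mul (2 / ((m + m : ℕ) : ℝ)) g Q hgc.continuousOn, hsum]
  set f : ℝ → ℝ := fun x => x ^ α * (r x * x ^ β) with hfdef
  have hαc : ContinuousOn (fun x : ℝ => x ^ α) (spectrum ℝ Q) :=
    (Real.continuous_rpow_const hα.1).continuousOn
  have hβc : ContinuousOn (fun x : ℝ => x ^ β) (spectrum ℝ Q) :=
    (Real.continuous_rpow_const hβ).continuousOn
  have hmul : opPow Q α * (Rbar γ (m + m) Q * opPow Q β) = cfc f Q := by
    rw [hRbar, opPow, opPow, ← cfc_mul r _ Q hrc.continuousOn hβc,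
      ← cfc_mul (fun x : ℝ => x ^ α) (fun x : ℝ => r x * x ^ β) Q hαc (hrc.continuousOn.mul hβc)]
  have happ : opPow Q α (Rbar γ (m + m) Q (opPow Q β h)) = (cfc f Q) h := by
    rw [← hmul]
    simp [ContinuousLinearMap.mul_apply]
  have hnorm : ‖cfc f Q‖ ≤ C * (γ * ((m + m : ℕ) : ℝ)) ^ (-(α + β)) := by
    apply norm_cfc_le (by positivity)
    intro x hx
    have hx0 : 0 ≤ x := spectrum_nonneg_of_nonneg hQ0 hx
    have hxn : x ≤ ‖Q‖ := by
      have h' := spectrum.norm_le_norm_of_mem (𝕜 := ℝ) hx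
      rwa [Real.norm_eq_abs, abs_of_nonneg hx0] at h'
    have hγx : γ * x < 1 / 4 := by nlinarith
    have hv0 : 0 ≤ 1 - γ * x := by linarith
    have hf0 : 0 ≤ f x := by
      have hg0 : 0 ≤ g x := Finset.sum_nonneg fun t _ => pow_nonneg hv0 t
      have hr0 : 0 ≤ r x := by
        rw [hrdef]; positivity
      have := Real.rpow_nonneg hx0 α
      have := Real.rpow_nonneg hx0 β
      rw [hfdef]; positivity
    rw [Real.norm_eq_abs, abs_of_nonneg hf0]
    exact key_bound α β γ m hα.1 hβ hγ hm x hx0 hγx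
  rw [happ]
  calc ‖(cfc f Q) h‖ ≤ ‖cfc f Q‖ * ‖h‖ := (cfc f Q).le_opNorm h
    _ ≤ (C * (γ * ((m + m : ℕ) : ℝ)) ^ (-(α + β))) * R :=
        mul_le_mul hnorm hhR (norm_nonneg h) (by positivity)
    _ = C * R * (γ * ((m + m : ℕ) : ℝ)) ^ (-(α + β)) := by ring
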